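/- Fix F > 0 and C ∈ (0,1). Define f_i^k = F·C·(1−C)^{i−1} for 1 ≤ i < k and f_k^k = F·(1−C)^{k−1}. Then for all k ≥ 1 and s ≥ 1: f_k^k ≥ ∑_{i=0}^{s} f_{k+i}^{k+s}. (Sybil-proofness: a node at the end of the path does not gain by inserting s Sybil nodes before the leader position.) -/

import Mathlib

theorem stmt_6 (F C : ℝ) (hF : 0 < F) (hC : C ∈ Set.Ioo (0:ℝ) 1)
    (f : ℕ → ℕ → ℝ)
    (hf_mid : ∀ k i : ℕ, 1 ≤ i → i < k → f k i = F * C * (1 - C) ^ (i - 1))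
    (hf_lead : ∀ k : ℕ, 1 ≤ k → f k k = F * (1 - C) ^ (k - 1)) :
    ∀ k : ℕ, 1 ≤ k → ∀ s : ℕ, 1 ≤ s →
      f k k ≥ ∑ i ∈ Finset.range (s + 1), f (k + s) (k + i) := by
  intro k hk s hs
  obtain ⟨m, rfl⟩ : ∃ m, k = m + 1 := ⟨k - 1, (Nat.succ_pred_eq_of_pos hk).symm⟩
  set x : ℝ := 1 - C with hx
  have hsum : ∑ i ∈ Finset.range (s + 1), f (m + 1 + s) (m + 1 + i) = F * x ^ m := by
    rw [Finset.sum_range_succ]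
    have h1 : ∀ i ∈ Finset.range s, f (m + 1 + s) (m + 1 + i) = F * C * (x ^ m * x ^ i) := by
      intro i hi
      rw [hf_mid (m + 1 + s) (m + 1 + i) (by omega) (by simp at hi; omega)]
      rw [← pow_add]
      congr 2
      omega
    rw [Finset.sum_congr rfl h1, hf_lead (m + 1 + s) (by omega)]
    have h2 : (m + 1 + s) - 1 = m + s := by omega
    rw [h2, pow_add]
    have hg : (∑ i ∈ Finset.range s, x ^ i) * (x - 1) = x ^ s - 1 := geom_sum_mul x s
    have h3 : ∑ i ∈ Finset.range s, F * C * (x ^ m * x ^ i)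
        = F * C * x ^ m * ∑ i ∈ Finset.range s, x ^ i := by
      rw [Finset.mul_sum]; ring_nf
    rw [h3]
    have hxC : x - 1 = -C := by rw [hx]; ring
    rw [hxC] at hg
    linear_combination (-(F * x ^ m)) * hg
  rw [hsum, hf_lead (m + 1) (by omega)]
  simp
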